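/- arXiv:2004.14181 — 3 statements merged into one kernel-verified Lean document; each statement's English description precedes it below -/
import Mathlib

section
/- Let 𝒮 be a monoidal category and let closed Λ_r-Frobenius data (C, μ, η, Δ, ε) on 𝒮 be given which is unital, counital, and satisfies the Frobenius relations. Then the multiplication is associative: for all x, y, z ∈ ℤ/r one has (μ_{x,y} ⊗ id_{C_z}) ≫ μ_{x+y−1,z} = α_{C_x,C_y,C_z} ≫ (id_{C_x} ⊗ μ_{y,z}) ≫ μ_{x,y+z−1} as morphisms (C_x ⊗ C_y) ⊗ C_z ⟶ C_{x+y+z−2}. (This is the associativity half of Remark 4.2: the Frobenius relation together with unitality and counitality implies associativity.) -/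
open CategoryTheory MonoidalCategory

universe v u

/-- Closed `Λ_r`-Frobenius data on a monoidal category `S`: a family of objects
`C : ℤ/r → S`, multiplications `μ_{x,y} : C x ⊗ C y ⟶ C (x+y-1)`, a unit
`η : 𝟙 ⟶ C 1`, comultiplications `Δ_{x,y} : C (x+y+1) ⟶ C x ⊗ C y` and a
counit `ε : C (-1) ⟶ 𝟙`. -/
structure ClosedLambdaData (r : ℕ) (S : Type u) [Category.{v} S] [MonoidalCategory S] where
  C : ZMod r → S
  mu : ∀ x y : ZMod r, C x ⊗ C y ⟶ C (x + y - 1)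
  eta : 𝟙_ S ⟶ C 1
  delta : ∀ x y : ZMod r, C (x + y + 1) ⟶ C x ⊗ C y
  eps : C (-1) ⟶ 𝟙_ S

namespace ClosedLambdaData

variable {r : ℕ} {S : Type u} [Category.{v} S] [MonoidalCategory S]

/-- The canonical identification `C a ⟶ C b` induced by an equality `a = b` in `ℤ/r`. -/
def cast (D : ClosedLambdaData r S) {a b : ZMod r} (h : a = b) : D.C a ⟶ D.C b :=
  eqToHom (congrArg D.C h)

/-- Unitality of the closed `Λ_r`-Frobenius data. -/
def IsUnital (D : ClosedLambdaData r S) : Prop :=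
  ∀ x : ZMod r,
    ((λ_ (D.C x)).inv ≫ (D.eta ▷ D.C x) ≫ D.mu 1 x ≫
        D.cast (show (1 : ZMod r) + x - 1 = x by ring) = 𝟙 (D.C x)) ∧
    ((ρ_ (D.C x)).inv ≫ (D.C x ◁ D.eta) ≫ D.mu x 1 ≫
        D.cast (show x + (1 : ZMod r) - 1 = x by ring) = 𝟙 (D.C x))

/-- Counitality of the closed `Λ_r`-Frobenius data. -/
def IsCounital (D : ClosedLambdaData r S) : Prop :=
  ∀ x : ZMod r,
    (D.cast (show x = (-1 : ZMod r) + x + 1 by ring) ≫ D.delta (-1) x ≫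
        (D.eps ▷ D.C x) ≫ (λ_ (D.C x)).hom = 𝟙 (D.C x)) ∧
    (D.cast (show x = x + (-1 : ZMod r) + 1 by ring) ≫ D.delta x (-1) ≫
        (D.C x ◁ D.eps) ≫ (ρ_ (D.C x)).hom = 𝟙 (D.C x))

/-- The Frobenius relations for the closed `Λ_r`-Frobenius data. -/
def IsFrobenius (D : ClosedLambdaData r S) : Prop :=
  ∀ x y z : ZMod r,
    ((D.delta x y ▷ D.C z) ≫ (α_ (D.C x) (D.C y) (D.C z)).hom ≫ (D.C x ◁ D.mu y z)
        = D.mu (x + y + 1) z ≫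
          D.cast (show x + y + 1 + z - 1 = x + (y + z - 1) + 1 by ring) ≫
          D.delta x (y + z - 1)) ∧
    ((D.C x ◁ D.delta y z) ≫ (α_ (D.C x) (D.C y) (D.C z)).inv ≫ (D.mu x y ▷ D.C z)
        = D.mu x (y + z + 1) ≫
          D.cast (show x + (y + z + 1) - 1 = x + y - 1 + z + 1 by ring) ≫
          D.delta (x + y - 1) z)

end ClosedLambdaData


section AuxiliaryLemmas

variable {r : ℕ} {S : Type u} [Category.{v} S] [MonoidalCategory S] (D : ClosedLambdaData r S)

lemma ClosedLambdaData.cast_trans {a b c : ZMod r} (h : a = b) (h' : b = c) :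
    D.cast h ≫ D.cast h' = D.cast (h.trans h') := by simp [ClosedLambdaData.cast]

lemma ClosedLambdaData.cast_trans_assoc {a b c : ZMod r} (h : a = b) (h' : b = c) {T : S}
    (f : D.C c ⟶ T) : D.cast h ≫ D.cast h' ≫ f = D.cast (h.trans h') ≫ f := by
  simp [ClosedLambdaData.cast]

lemma ClosedLambdaData.mu_congr_left {a a' : ZMod r} (h : a = a') (b : ZMod r) :
    D.mu a b = (D.cast h ▷ D.C b) ≫ D.mu a' b ≫
      D.cast (show a' + b - 1 = a + b - 1 by rw [h]) := by
  subst h; simp [ClosedLambdaData.cast]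

lemma ClosedLambdaData.mu_congr_right (a : ZMod r) {b b' : ZMod r} (h : b = b') :
    D.mu a b = (D.C a ◁ D.cast h) ≫ D.mu a b' ≫
      D.cast (show a + b' - 1 = a + b - 1 by rw [h]) := by
  subst h; simp [ClosedLambdaData.cast]

lemma ClosedLambdaData.delta_congr_left {a a' : ZMod r} (h : a = a') (b : ZMod r) :
    D.delta a b = D.cast (show a + b + 1 = a' + b + 1 by rw [h]) ≫ D.delta a' b ≫
      (D.cast h.symm ▷ D.C b) := by
  subst h; simp [ClosedLambdaData.cast]

lemma ClosedLambdaData.delta_congr_right (a : ZMod r) {b b' : ZMod r} (h : b = b') :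
    D.delta a b = D.cast (show a + b + 1 = a + b' + 1 by rw [h]) ≫ D.delta a b' ≫
      (D.C a ◁ D.cast h.symm) := by
  subst h; simp [ClosedLambdaData.cast]

/-- Generic monoidal-category lemma: the two ways of contracting with `G`, `M`, `N`, `e`
agree by coherence, naturality and the interchange law. -/
lemma ClosedLambdaData.assoc_aux {X Y Z P Q W E : S} (G : Y ⟶ P ⊗ Q) (M : X ⊗ P ⟶ W)
    (N : Q ⊗ Z ⟶ E) (e : E ⟶ 𝟙_ S) :
    (((X ◁ G) ≫ (α_ X P Q).inv ≫ (M ▷ Q)) ▷ Z) ≫ (α_ W Q Z).hom ≫ (W ◁ N) ≫ (W ◁ e) ≫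
        (ρ_ W).hom
      = (α_ X Y Z).hom ≫ (X ◁ ((G ▷ Z) ≫ (α_ P Q Z).hom ≫ (P ◁ N))) ≫ (α_ X P E).inv ≫
        (M ▷ E) ≫ (W ◁ e) ≫ (ρ_ W).hom := by
  simp only [MonoidalCategory.whiskerLeft_comp, comp_whiskerRight, Category.assoc]
  rw [associator_naturality_left_assoc M Q Z, associator_inv_naturality_right_assoc X P N,
    whisker_exchange_assoc M N]
  monoidal

end AuxiliaryLemmas

/-- The associativity half of Remark 4.2: for unital, counital closed `Λ_r`-Frobenius
data satisfying the Frobenius relations, the multiplication is associative. -/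
theorem ClosedLambdaData.associativity {r : ℕ} {S : Type u} [Category.{v} S]
    [MonoidalCategory S] (D : ClosedLambdaData r S)
    (hU : D.IsUnital) (hC : D.IsCounital) (hF : D.IsFrobenius) (x y z : ZMod r) :
    (D.mu x y ▷ D.C z) ≫ D.mu (x + y - 1) z ≫
        D.cast (show x + y - 1 + z - 1 = x + y + z - 2 by ring)
      = (α_ (D.C x) (D.C y) (D.C z)).hom ≫ (D.C x ◁ D.mu y z) ≫ D.mu x (y + z - 1) ≫
        D.cast (show x + (y + z - 1) - 1 = x + y + z - 2 by ring) := by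
  obtain ⟨-, cu⟩ := hC (x + y + z - 2)
  have A1 : D.mu (x + y - 1) z ≫
        D.cast (show x + y - 1 + z - 1 = x + y + z - 2 + -1 + 1 by ring) ≫
        D.delta (x + y + z - 2) (-1)
      = (D.cast (show x + y - 1 = x + y + z - 2 + -z + 1 by ring) ▷ D.C z) ≫
        (D.delta (x + y + z - 2) (-z) ▷ D.C z) ≫
        (α_ (D.C (x + y + z - 2)) (D.C (-z)) (D.C z)).hom ≫
        (D.C (x + y + z - 2) ◁
          (D.mu (-z) z ≫ D.cast (show -z + z - 1 = (-1 : ZMod r) by ring))) := by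
    rw [D.mu_congr_left (show x + y - 1 = x + y + z - 2 + -z + 1 by ring) z,
      D.delta_congr_right (x + y + z - 2) (show (-1 : ZMod r) = -z + z - 1 by ring)]
    simp only [Category.assoc, ClosedLambdaData.cast_trans_assoc]
    rw [← reassoc_of% (hF (x + y + z - 2) (-z) z).1]
    simp only [MonoidalCategory.whiskerLeft_comp, Category.assoc]
  have A2 : D.mu x y ≫ D.cast (show x + y - 1 = x + y + z - 2 + -z + 1 by ring) ≫
        D.delta (x + y + z - 2) (-z)
      = (D.C x ◁ (D.cast (show y = y + z - 1 + -z + 1 by ring) ≫ D.delta (y + z - 1) (-z))) ≫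
        (α_ (D.C x) (D.C (y + z - 1)) (D.C (-z))).inv ≫
        ((D.mu x (y + z - 1) ≫
          D.cast (show x + (y + z - 1) - 1 = x + y + z - 2 by ring)) ▷ D.C (-z)) := by
    rw [D.mu_congr_right x (show y = y + z - 1 + -z + 1 by ring),
      D.delta_congr_left (show (x + y + z - 2 : ZMod r) = x + (y + z - 1) - 1 by ring) (-z)]
    simp only [Category.assoc, ClosedLambdaData.cast_trans_assoc]
    rw [← reassoc_of% (hF x (y + z - 1) (-z)).2]
    simp only [MonoidalCategory.whiskerLeft_comp, comp_whiskerRight, Category.assoc]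
  have B1 : D.mu x (y + z - 1) ≫
        D.cast (show x + (y + z - 1) - 1 = x + y + z - 2 + -1 + 1 by ring) ≫
        D.delta (x + y + z - 2) (-1)
      = (D.C x ◁ (D.cast (show y + z - 1 = y + z - 1 + -1 + 1 by ring) ≫
          D.delta (y + z - 1) (-1))) ≫
        (α_ (D.C x) (D.C (y + z - 1)) (D.C (-1))).inv ≫
        ((D.mu x (y + z - 1) ≫
          D.cast (show x + (y + z - 1) - 1 = x + y + z - 2 by ring)) ▷ D.C (-1)) := by
    conv_lhs =>
      rw [D.mu_congr_right x (show (y + z - 1 : ZMod r) = y + z - 1 + -1 + 1 by ring),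
        D.delta_congr_left (show (x + y + z - 2 : ZMod r) = x + (y + z - 1) - 1 by ring) (-1)]
    simp only [Category.assoc, ClosedLambdaData.cast_trans_assoc]
    rw [← reassoc_of% (hF x (y + z - 1) (-1)).2]
    simp only [MonoidalCategory.whiskerLeft_comp, comp_whiskerRight, Category.assoc]
  have B2 : D.mu y z ≫ D.cast (show y + z - 1 = y + z - 1 + -1 + 1 by ring) ≫
        D.delta (y + z - 1) (-1)
      = ((D.cast (show y = y + z - 1 + -z + 1 by ring) ≫ D.delta (y + z - 1) (-z)) ▷ D.C z) ≫
        (α_ (D.C (y + z - 1)) (D.C (-z)) (D.C z)).hom ≫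
        (D.C (y + z - 1) ◁
          (D.mu (-z) z ≫ D.cast (show -z + z - 1 = (-1 : ZMod r) by ring))) := by
    rw [D.mu_congr_left (show y = y + z - 1 + -z + 1 by ring) z,
      D.delta_congr_right (y + z - 1) (show (-1 : ZMod r) = -z + z - 1 by ring)]
    simp only [Category.assoc, ClosedLambdaData.cast_trans_assoc]
    rw [← reassoc_of% (hF (y + z - 1) (-z) z).1]
    simp only [MonoidalCategory.whiskerLeft_comp, comp_whiskerRight, Category.assoc]
  have A2w : (D.mu x y ▷ D.C z) ≫
        (D.cast (show x + y - 1 = x + y + z - 2 + -z + 1 by ring) ▷ D.C z) ≫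
        (D.delta (x + y + z - 2) (-z) ▷ D.C z)
      = ((D.C x ◁ (D.cast (show y = y + z - 1 + -z + 1 by ring) ≫
            D.delta (y + z - 1) (-z))) ≫
          (α_ (D.C x) (D.C (y + z - 1)) (D.C (-z))).inv ≫
          ((D.mu x (y + z - 1) ≫
            D.cast (show x + (y + z - 1) - 1 = x + y + z - 2 by ring)) ▷ D.C (-z))) ▷
        D.C z := by
    rw [← comp_whiskerRight, ← comp_whiskerRight, A2]
  have B2w : (D.C x ◁ D.mu y z) ≫
        (D.C x ◁ (D.cast (show y + z - 1 = y + z - 1 + -1 + 1 by ring) ≫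
          D.delta (y + z - 1) (-1)))
      = D.C x ◁
          (((D.cast (show y = y + z - 1 + -z + 1 by ring) ≫
              D.delta (y + z - 1) (-z)) ▷ D.C z) ≫
            (α_ (D.C (y + z - 1)) (D.C (-z)) (D.C z)).hom ≫
            (D.C (y + z - 1) ◁
              (D.mu (-z) z ≫ D.cast (show -z + z - 1 = (-1 : ZMod r) by ring)))) := by
    rw [← MonoidalCategory.whiskerLeft_comp, B2]
  have ins1 : D.cast (show x + y - 1 + z - 1 = x + y + z - 2 by ring)
      = D.cast (show x + y - 1 + z - 1 = x + y + z - 2 + -1 + 1 by ring) ≫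
        D.delta (x + y + z - 2) (-1) ≫ (D.C (x + y + z - 2) ◁ D.eps) ≫
        (ρ_ (D.C (x + y + z - 2))).hom := by
    conv_rhs => rw [← D.cast_trans_assoc (show x + y - 1 + z - 1 = x + y + z - 2 by ring)
      (show (x + y + z - 2 : ZMod r) = x + y + z - 2 + -1 + 1 by ring)]
    rw [cu, Category.comp_id]
  have ins2 : D.cast (show x + (y + z - 1) - 1 = x + y + z - 2 by ring)
      = D.cast (show x + (y + z - 1) - 1 = x + y + z - 2 + -1 + 1 by ring) ≫
        D.delta (x + y + z - 2) (-1) ≫ (D.C (x + y + z - 2) ◁ D.eps) ≫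
        (ρ_ (D.C (x + y + z - 2))).hom := by
    conv_rhs => rw [← D.cast_trans_assoc (show x + (y + z - 1) - 1 = x + y + z - 2 by ring)
      (show (x + y + z - 2 : ZMod r) = x + y + z - 2 + -1 + 1 by ring)]
    rw [cu, Category.comp_id]
  rw [ins1, ins2, reassoc_of% A1, reassoc_of% B1, reassoc_of% A2w, reassoc_of% B2w]
  exact ClosedLambdaData.assoc_aux _ _ _ D.eps
end

section
/- (Key step in the proof of Proposition 4.3(2), via the Euclidean algorithm.) Let r be a positive integer, let α be any type, and let T : ℤ/r → ℤ/r → α be a function satisfying, for all x, z ∈ ℤ/r, the relations T(x, z) = T(x, x + z) and T(x, z) = T(x + z, z). Then for all x, z ∈ ℤ/r one has T(x, z) = T(g, 0), where g ∈ ℤ/r is the image of the natural number gcd(x̄, gcd(z̄, r)) and x̄, z̄ ∈ {0, 1, …, r−1} denote the canonical representatives of x and z. -/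
private lemma euclid_gcd_emod (a b : ℤ) (hb : b ≠ 0) :
    Int.gcd (-b) (a % b) = Int.gcd a b := by
  rw [Int.neg_gcd]
  apply Nat.dvd_antisymm
  · rw [← Int.natCast_dvd_natCast]
    apply Int.dvd_coe_gcd
    · have h1 : ((Int.gcd b (a % b) : ℕ) : ℤ) ∣ b := Int.gcd_dvd_left _ _
      have h2 : ((Int.gcd b (a % b) : ℕ) : ℤ) ∣ a % b := Int.gcd_dvd_right _ _
      have hd := dvd_add h2 (Dvd.dvd.mul_right h1 (a / b))
      rwa [Int.emod_add_mul_ediv] at hd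
    · exact Int.gcd_dvd_left _ _
  · rw [← Int.natCast_dvd_natCast]
    apply Int.dvd_coe_gcd
    · exact Int.gcd_dvd_right _ _
    · have h1 : ((Int.gcd a b : ℕ) : ℤ) ∣ a := Int.gcd_dvd_left _ _
      have h2 : ((Int.gcd a b : ℕ) : ℤ) ∣ b := Int.gcd_dvd_right _ _
      rw [Int.emod_def]
      exact dvd_sub h1 (Dvd.dvd.mul_right h2 _)

private lemma euclid_swap {r : ℕ} {α : Type*} (T : ZMod r → ZMod r → α)
    (h1 : ∀ x z : ZMod r, T x z = T x (x + z))
    (h2 : ∀ x z : ZMod r, T x z = T (x + z) z)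
    (x z : ZMod r) : T x z = T (-z) x := by
  have e1 : T x z = T x (x + z) := h1 x z
  have e2 : T (-z) (x + z) = T (-z + (x + z)) (x + z) := h2 _ _
  have e3 : T (-z) (x + z) = T (-z) (-z + (x + z)) := h1 _ _
  rw [e1]
  rw [show -z + (x + z) = x by ring] at e2 e3
  rw [← e2, e3]

private lemma euclid_neg {r : ℕ} {α : Type*} (T : ZMod r → ZMod r → α)
    (h1 : ∀ x z : ZMod r, T x z = T x (x + z))
    (h2 : ∀ x z : ZMod r, T x z = T (x + z) z)
    (a : ZMod r) : T a 0 = T (-a) 0 := by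
  have s1 := euclid_swap T h1 h2 a 0
  have s2 := euclid_swap T h1 h2 0 a
  simp only [neg_zero] at s1
  rw [s1, s2]

private lemma euclid_mul {r : ℕ} {α : Type*} (T : ZMod r → ZMod r → α)
    (h2 : ∀ x z : ZMod r, T x z = T (x + z) z)
    (n : ℤ) (x z : ZMod r) : T x z = T (x + n * z) z := by
  induction n using Int.induction_on with
  | zero => simp
  | succ k ih =>
      push_cast at ih ⊢
      rw [ih, h2]
      congr 1; ring
  | pred k ih =>
      push_cast at ih ⊢
      rw [ih]
      have h := h2 (x + (-(k : ZMod r) - 1) * z) z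
      rw [show x + (-(k : ZMod r) - 1) * z + z = x + -(k : ZMod r) * z by ring] at h
      exact h.symm

private lemma euclid_key {r : ℕ} {α : Type*} (T : ZMod r → ZMod r → α)
    (h1 : ∀ x z : ZMod r, T x z = T x (x + z))
    (h2 : ∀ x z : ZMod r, T x z = T (x + z) z) :
    ∀ n : ℕ, ∀ a b : ℤ, b.natAbs = n →
    T (a : ZMod r) (b : ZMod r) = T ((Int.gcd a b : ℕ) : ZMod r) 0 := by
  intro n
  induction n using Nat.strong_induction_on with
  | _ n ih =>
    intro a b hb
    rcases eq_or_ne b 0 with rfl | hb0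
    · have hg : Int.gcd a 0 = a.natAbs := Int.gcd_zero_right a
      rw [hg]
      have hcast : ((a.natAbs : ℕ) : ZMod r) = ((a.natAbs : ℤ) : ZMod r) := (Int.cast_natCast _).symm
      rcases Int.natAbs_eq a with h | h
      · rw [hcast, ← h]; simp only [Int.cast_zero]
      · rw [hcast, show ((a.natAbs : ℤ) : ZMod r) = -(a : ZMod r) by
          rw [show ((a.natAbs : ℤ)) = -a by omega]; push_cast; ring]
        rw [← euclid_neg T h1 h2]; simp only [Int.cast_zero]
    · have step1 : T (a : ZMod r) (b : ZMod r) = T ((a % b : ℤ) : ZMod r) (b : ZMod r) := by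
        rw [euclid_mul T h2 (-(a / b)) ((a : ZMod r)) ((b : ZMod r))]
        congr 1
        rw [Int.emod_def]; push_cast; ring
      have step2 : T ((a % b : ℤ) : ZMod r) (b : ZMod r)
          = T ((-b : ℤ) : ZMod r) ((a % b : ℤ) : ZMod r) := by
        rw [euclid_swap T h1 h2 ((a % b : ℤ) : ZMod r) ((b : ZMod r))]
        push_cast; ring_nf
      have hlt : (a % b).natAbs < n := by
        subst hb
        have hb' : (0:ℤ) < |b| := abs_pos.mpr hb0
        have hme : a % b = a % |b| := by
          rcases abs_choice b with h | h
          · rw [h]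
          · rw [h, Int.emod_neg]
        have hn1 := Int.emod_nonneg a hb0
        have hn2 : a % b < |b| := by rw [hme]; exact Int.emod_lt_of_pos a hb'
        rw [Int.abs_eq_natAbs] at hn2
        omega
      have step3 := ih _ hlt (-b) (a % b) rfl
      rw [step1, step2, step3, euclid_gcd_emod a b hb0]

/-- Key step in the proof of Proposition 4.3(2), via the Euclidean algorithm: if
`T : ℤ/r → ℤ/r → α` satisfies `T (x, z) = T (x, x + z)` and `T (x, z) = T (x + z, z)`
for all `x, z`, then `T (x, z) = T (gcd (x̄, gcd (z̄, r)), 0)`, where `x̄, z̄` are the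
canonical representatives of `x` and `z`. -/
theorem euclid_step {r : ℕ} (hr : 0 < r) {α : Type*} (T : ZMod r → ZMod r → α)
    (h1 : ∀ x z : ZMod r, T x z = T x (x + z))
    (h2 : ∀ x z : ZMod r, T x z = T (x + z) z)
    (x z : ZMod r) :
    T x z = T ((Nat.gcd x.val (Nat.gcd z.val r) : ℕ) : ZMod r) 0 := by
  haveI : NeZero r := ⟨hr.ne'⟩
  have hx : (((x.val : ℤ)) : ZMod r) = x := by
    push_cast; exact ZMod.natCast_rightInverse x
  have hz : (((z.val : ℤ)) : ZMod r) = z := by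
    push_cast; exact ZMod.natCast_rightInverse z
  have k1 := euclid_key T h1 h2 _ (x.val : ℤ) (z.val : ℤ) rfl
  rw [hx, hz] at k1
  set g1 : ℕ := Int.gcd (x.val : ℤ) (z.val : ℤ) with hg1
  have k2 := euclid_key T h1 h2 _ (g1 : ℤ) (r : ℤ) rfl
  have hr0 : ((r : ℤ) : ZMod r) = 0 := by push_cast; simp
  have hgc : ((g1 : ℤ) : ZMod r) = ((g1 : ℕ) : ZMod r) := by push_cast; ring
  rw [hr0, hgc] at k2
  rw [k1, k2]
  congr 2
  have e1 : g1 = Nat.gcd x.val z.val := Int.gcd_natCast_natCast _ _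
  have e2 : Int.gcd (g1 : ℤ) (r : ℤ) = Nat.gcd g1 r := Int.gcd_natCast_natCast _ _
  rw [e2, e1, Nat.gcd_assoc]
end

section
/- (The diagonal consequence used to prove Proposition 4.3(2).) Let r be a positive integer, let α be any type, and let T : ℤ/r → ℤ/r → α be a function satisfying, for all x, z ∈ ℤ/r, the relations T(x, z) = T(x, x + z) and T(x, z) = T(x + z, z). If x, y ∈ ℤ/r satisfy gcd(x̄, r) = gcd(ȳ, r) (where x̄, ȳ ∈ {0, 1, …, r−1} are the canonical representatives), then T(x, x) = T(y, y). -/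
/-- The diagonal consequence used to prove Proposition 4.3(2): if
`T : ℤ/r → ℤ/r → α` satisfies `T (x, z) = T (x, x + z)` and `T (x, z) = T (x + z, z)`
for all `x, z`, and `gcd (x̄, r) = gcd (ȳ, r)` for the canonical representatives
`x̄, ȳ` of `x, y`, then `T (x, x) = T (y, y)`. -/
theorem euclid_diagonal {r : ℕ} (hr : 0 < r) {α : Type*} (T : ZMod r → ZMod r → α)
    (h1 : ∀ x z : ZMod r, T x z = T x (x + z))
    (h2 : ∀ x z : ZMod r, T x z = T (x + z) z)
    (x y : ZMod r) (h : Nat.gcd x.val r = Nat.gcd y.val r) :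
    T x x = T y y := by
  haveI : NeZero r := ⟨hr.ne'⟩
  -- natural number versions by induction
  have lemRn : ∀ (n : ℕ) (u z : ZMod r), T u z = T u (z + n * u) := by
    intro n
    induction n with
    | zero => intro u z; simp
    | succ n ih =>
      intro u z
      rw [ih u z, h1 u (z + n * u)]
      congr 1
      push_cast
      ring
  have lemLn : ∀ (n : ℕ) (u z : ZMod r), T u z = T (u + n * z) z := by
    intro n
    induction n with
    | zero => intro u z; simp
    | succ n ih =>
      intro u z
      rw [ih u z, h2 (u + n * z) z]
      congr 1
      push_cast
      ring
  -- ZMod coefficient versions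
  have lemR : ∀ (c u z : ZMod r), T u z = T u (z + c * u) := by
    intro c u z
    have hc : ((c.val : ℕ) : ZMod r) = c := by rw [ZMod.natCast_val, ZMod.cast_id]
    rw [← hc]
    exact lemRn c.val u z
  have lemL : ∀ (c u z : ZMod r), T u z = T (u + c * z) z := by
    intro c u z
    have hc : ((c.val : ℕ) : ZMod r) = c := by rw [ZMod.natCast_val, ZMod.cast_id]
    rw [← hc]
    exact lemLn c.val u z
  -- key: diagonal value only depends on gcd
  have key : ∀ u : ZMod r, T u u = T ((Nat.gcd u.val r : ZMod r)) ((Nat.gcd u.val r : ZMod r)) := by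
    intro u
    set d : ℕ := Nat.gcd u.val r with hd
    set g : ZMod r := (d : ZMod r) with hg
    -- g = a * u for some a
    obtain ⟨a, ha⟩ : ∃ a : ZMod r, a * u = g := by
      refine ⟨((Nat.gcdA u.val r : ℤ) : ZMod r), ?_⟩
      have hbez : (d : ℤ) = u.val * Nat.gcdA u.val r + r * Nat.gcdB u.val r :=
        Nat.gcd_eq_gcd_ab u.val r
      have : ((d : ℤ) : ZMod r) = ((u.val * Nat.gcdA u.val r + r * Nat.gcdB u.val r : ℤ) : ZMod r) := by
        rw [← hbez]
      push_cast at this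
      rw [ZMod.natCast_val, ZMod.cast_id] at this
      simp only [ZMod.natCast_self, zero_mul, add_zero] at this
      rw [hg, this]
      ring
    -- u = b * g for some b
    obtain ⟨b, hb⟩ : ∃ b : ZMod r, b * g = u := by
      refine ⟨((u.val / d : ℕ) : ZMod r), ?_⟩
      have hdvd : d ∣ u.val := Nat.gcd_dvd_left _ _
      have : ((u.val / d) * d : ℕ) = u.val := Nat.div_mul_cancel hdvd
      rw [hg]
      have := congrArg (fun n : ℕ => (n : ZMod r)) this
      push_cast at this
      rw [this, ZMod.natCast_val, ZMod.cast_id]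
    calc T u u = T (u + (a - 1) * u) u := lemL (a - 1) u u
    _ = T g u := by rw [show u + (a - 1) * u = a * u by ring, ha]
    _ = T g (u + (1 - b) * g) := lemR (1 - b) g u
    _ = T g g := by rw [show u + (1 - b) * g = g + (u - b * g) by ring, hb, sub_self, add_zero]
  rw [key x, key y, h]
end
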